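/- Let f_1, f_2, f_3 : ℝ → ℝ be continuous and bounded, let K_1 be a probability density function on [0,∞), and let μ : ℝ → ℝ be continuous with μ(y) ≥ μ₀ for all y, for some μ₀ > 0. Suppose x_1, x_2, x_3 : ℝ → ℝ are bounded differentiable functions satisfying, for all t ∈ ℝ: x_1'(t) = f_1(∫_0^∞ x_3(t - φ) K_1(φ) dφ) - μ(x_3(t)) x_1(t); x_2'(t) = f_2(x_1(t)) - μ(x_3(t)) x_2(t); x_3'(t) = f_3(x_2(t)) - μ(x_3(t)) x_3(t). Then for every t ∈ ℝ, x_3'(t) = f_3( ∫_{-∞}^t f_2( ∫_{-∞}^r f_1( ∫_0^∞ x_3(σ - φ) K_1(φ) dφ ) · exp(-∫_σ^r μ(x_3(u)) du) dσ ) · exp(-∫_r^t μ(x_3(u)) du) dr ) - μ(x_3(t)) x_3(t). -/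

import Mathlib

open MeasureTheory Set Filter Topology

lemma integrableOn_exp_mul_Iic' {b : ℝ} (hb : 0 < b) (t : ℝ) :
    IntegrableOn (fun σ => Real.exp (b * σ)) (Set.Iic t) := by
  have hcont : Continuous fun σ : ℝ => Real.exp (b * σ) := by continuity
  have hint : ∀ a c : ℝ, ∫ x in a..c, Real.exp (b * x)
      = Real.exp (b * c) / b - Real.exp (b * a) / b := by
    intro a c
    refine intervalIntegral.integral_eq_sub_of_hasDerivAt
      (f := fun x => Real.exp (b * x) / b) (fun x _ => ?_)
      (hcont.intervalIntegrable a c)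
    have h1 : HasDerivAt (fun x : ℝ => b * x) b x := by
      simpa using (hasDerivAt_id x).const_mul b
    have := (h1.exp).div_const b
    simpa [mul_comm, mul_div_assoc, mul_div_cancel_left₀ _ hb.ne'] using this
  refine integrableOn_Iic_of_intervalIntegral_norm_bounded (Real.exp (b * t) / b) t
    (fun y => hcont.integrableOn_Ioc) tendsto_id ?_
  filter_upwards [eventually_le_atBot t] with y hy
  have hn : ∀ x : ℝ, ‖Real.exp (b * x)‖ = Real.exp (b * x) := fun x =>
    Real.norm_of_nonneg (Real.exp_pos _).le
  simp_rw [hn, hint, id_eq]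
  have h := div_nonneg (Real.exp_pos (b * y)).le hb.le
  linarith

lemma key_repr (μ₀ : ℝ) (hμ₀ : 0 < μ₀) (m : ℝ → ℝ) (hm : Continuous m)
    (hmlb : ∀ u, μ₀ ≤ m u) (g : ℝ → ℝ) (hg : Continuous g)
    (hgb : ∃ C, ∀ s, |g s| ≤ C) (x : ℝ → ℝ) (hxb : ∃ C, ∀ s, |x s| ≤ C)
    (hx : ∀ s, HasDerivAt x (g s - m s * x s) s) (t : ℝ) :
    x t = ∫ σ in Set.Iic t, g σ * Real.exp (-∫ u in σ..t, m u) := by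
  obtain ⟨Cg, hCg⟩ := hgb
  obtain ⟨Cx, hCx⟩ := hxb
  have hCg0 : 0 ≤ Cg := le_trans (abs_nonneg _) (hCg 0)
  set M : ℝ → ℝ := fun s => ∫ u in (0:ℝ)..s, m u with hMdef
  have hM : ∀ s, HasDerivAt M (m s) s := fun s =>
    intervalIntegral.integral_hasDerivAt_right (hm.intervalIntegrable 0 s)
      (hm.stronglyMeasurableAtFilter _ _) hm.continuousAt
  have hMcont : Continuous M := by
    rw [continuous_iff_continuousAt]; exact fun s => (hM s).continuousAt
  have hMdiff : ∀ a c : ℝ, M c - M a = ∫ u in a..c, m u := by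
    intro a c
    have := intervalIntegral.integral_add_adjacent_intervals (μ := volume)
      (hm.intervalIntegrable 0 a) (hm.intervalIntegrable a c)
    simp only [hMdef]; linarith
  have hMbound : ∀ {a c : ℝ}, a ≤ c → μ₀ * (c - a) ≤ M c - M a := by
    intro a c hac
    rw [hMdiff]
    calc μ₀ * (c - a) = ∫ _ in a..c, μ₀ := by
          rw [intervalIntegral.integral_const]; rw [smul_eq_mul]; ring
      _ ≤ ∫ u in a..c, m u := by
          exact intervalIntegral.integral_mono_on hac intervalIntegrable_const
            (hm.intervalIntegrable a c) (fun u _ => hmlb u)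
  set E : ℝ → ℝ := fun s => Real.exp (M s) with hEdef
  have hE : ∀ s, HasDerivAt E (m s * E s) s := fun s => by
    simpa [hEdef, mul_comm] using (hM s).exp
  set y : ℝ → ℝ := fun s => x s * E s with hydef
  have hy : ∀ s, HasDerivAt y (g s * E s) s := fun s => by
    have h := (hx s).mul (hE s)
    exact h.congr_deriv (by ring)
  set h : ℝ → ℝ := fun σ => g σ * E σ with hhdef
  have hhcont : Continuous h := hg.mul (Real.continuous_exp.comp hMcont)
  have hsub : ∀ s : ℝ, ∫ σ in s..t, h σ = y t - y s := fun s =>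
    intervalIntegral.integral_eq_sub_of_hasDerivAt (fun σ _ => hy σ)
      (hhcont.intervalIntegrable s t)
  have hInt : IntegrableOn h (Set.Iic t) := by
    refine Integrable.mono'
      ((integrableOn_exp_mul_Iic' hμ₀ t).const_mul (Cg * Real.exp (M t - μ₀ * t)))
      hhcont.aestronglyMeasurable.restrict ?_
    filter_upwards [ae_restrict_mem measurableSet_Iic] with σ hσ
    have h2 : M σ ≤ M t - μ₀ * (t - σ) := by
      have := hMbound (show σ ≤ t from hσ); linarith
    have : ‖h σ‖ = |g σ| * Real.exp (M σ) := by
      rw [hhdef]; simp [abs_mul, abs_of_pos (Real.exp_pos _)]; left; exact abs_of_pos (Real.exp_pos _)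
    rw [this]
    calc |g σ| * Real.exp (M σ)
        ≤ Cg * Real.exp (M t - μ₀ * t + μ₀ * σ) := by
          apply mul_le_mul (hCg σ) (Real.exp_le_exp.2 (by linarith))
            (Real.exp_pos _).le hCg0
      _ = Cg * Real.exp (M t - μ₀ * t) * Real.exp (μ₀ * σ) := by
          rw [Real.exp_add]; ring
  have hy0 : Tendsto y atBot (𝓝 0) := by
    have hbound : ∀ᶠ s in atBot,
        ‖y s‖ ≤ Cx * Real.exp (M t - μ₀ * t) * Real.exp (μ₀ * s) := by
      filter_upwards [eventually_le_atBot t] with s hs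
      have h2 : M s ≤ M t - μ₀ * (t - s) := by
        have := hMbound hs; linarith
      have : ‖y s‖ = |x s| * Real.exp (M s) := by
        rw [hydef]; simp [abs_mul, abs_of_pos (Real.exp_pos _)]; left; exact abs_of_pos (Real.exp_pos _)
      rw [this]
      have hCx0 : 0 ≤ Cx := le_trans (abs_nonneg _) (hCx 0)
      calc |x s| * Real.exp (M s)
          ≤ Cx * Real.exp (M t - μ₀ * t + μ₀ * s) := by
            apply mul_le_mul (hCx s) (Real.exp_le_exp.2 (by linarith))
              (Real.exp_pos _).le hCx0
        _ = Cx * Real.exp (M t - μ₀ * t) * Real.exp (μ₀ * s) := by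
            rw [Real.exp_add]; ring
    have hlim : Tendsto (fun s => Cx * Real.exp (M t - μ₀ * t) * Real.exp (μ₀ * s))
        atBot (𝓝 0) := by
      have h1 : Tendsto (fun s : ℝ => μ₀ * s) atBot atBot :=
        tendsto_id.const_mul_atBot hμ₀
      have h2 := Real.tendsto_exp_atBot.comp h1
      have := h2.const_mul (Cx * Real.exp (M t - μ₀ * t))
      simpa using this
    exact squeeze_zero_norm' hbound hlim
  have hlim1 : Tendsto (fun s => ∫ σ in s..t, h σ) atBot (𝓝 (∫ σ in Set.Iic t, h σ)) :=
    intervalIntegral_tendsto_integral_Iic t hInt tendsto_id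
  have hlim2 : Tendsto (fun s => ∫ σ in s..t, h σ) atBot (𝓝 (y t)) := by
    have : Tendsto (fun s => y t - y s) atBot (𝓝 (y t - 0)) :=
      tendsto_const_nhds.sub hy0
    simpa [hsub] using this
  have hyt : y t = ∫ σ in Set.Iic t, h σ := tendsto_nhds_unique hlim2 hlim1
  have hxt : x t = y t * Real.exp (-(M t)) := by
    rw [hydef]; simp [hEdef, mul_assoc, ← Real.exp_add]
  rw [hxt, hyt, ← integral_mul_const]
  congr 1
  funext σ
  rw [hhdef]
  simp only [hEdef]
  rw [mul_assoc, ← Real.exp_add, ← hMdiff σ t]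
  ring_nf
theorem stmt3
    (f₁ f₂ f₃ : ℝ → ℝ) (K₁ : ℝ → ℝ) (μ : ℝ → ℝ) (μ₀ : ℝ)
    (hf₁ : Continuous f₁) (hf₂ : Continuous f₂) (hf₃ : Continuous f₃)
    (hf₁b : ∃ C, ∀ y, |f₁ y| ≤ C) (hf₂b : ∃ C, ∀ y, |f₂ y| ≤ C)
    (hf₃b : ∃ C, ∀ y, |f₃ y| ≤ C)
    (hKmeas : Measurable K₁) (hKnonneg : ∀ φ : ℝ, 0 ≤ φ → 0 ≤ K₁ φ)
    (hKint : ∫ φ in Set.Ioi (0 : ℝ), K₁ φ = 1)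
    (hμcont : Continuous μ) (hμ₀ : 0 < μ₀) (hμlb : ∀ y, μ₀ ≤ μ y)
    (x₁ x₂ x₃ : ℝ → ℝ)
    (hx₁b : ∃ C, ∀ t, |x₁ t| ≤ C) (hx₂b : ∃ C, ∀ t, |x₂ t| ≤ C)
    (hx₃b : ∃ C, ∀ t, |x₃ t| ≤ C)
    (h1 : ∀ t : ℝ, HasDerivAt x₁
      (f₁ (∫ φ in Set.Ioi (0 : ℝ), x₃ (t - φ) * K₁ φ) - μ (x₃ t) * x₁ t) t)
    (h2 : ∀ t : ℝ, HasDerivAt x₂ (f₂ (x₁ t) - μ (x₃ t) * x₂ t) t)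
    (h3 : ∀ t : ℝ, HasDerivAt x₃ (f₃ (x₂ t) - μ (x₃ t) * x₃ t) t) :
    ∀ t : ℝ, HasDerivAt x₃
      (f₃ (∫ r in Set.Iic t,
            f₂ (∫ σ in Set.Iic r,
                  f₁ (∫ φ in Set.Ioi (0 : ℝ), x₃ (σ - φ) * K₁ φ)
                    * Real.exp (-∫ u in σ..r, μ (x₃ u)))
              * Real.exp (-∫ u in r..t, μ (x₃ u)))
        - μ (x₃ t) * x₃ t) t := by
  have hx₃cont : Continuous x₃ := by
    rw [continuous_iff_continuousAt]
    exact fun s => (h3 s).differentiableAt.continuousAt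
  have hx₁cont : Continuous x₁ := by
    rw [continuous_iff_continuousAt]
    exact fun s => (h1 s).differentiableAt.continuousAt
  have hKi : IntegrableOn K₁ (Set.Ioi (0 : ℝ)) := by
    by_contra hc
    rw [integral_undef hc] at hKint
    norm_num at hKint
  obtain ⟨C3, hC3⟩ := hx₃b
  -- continuity of the delay term
  have hdelay : Continuous fun s => ∫ φ in Set.Ioi (0 : ℝ), x₃ (s - φ) * K₁ φ := by
    rw [continuous_iff_continuousAt]
    intro s
    refine continuousAt_of_dominated (bound := fun φ => C3 * ‖K₁ φ‖) ?_ ?_ ?_ ?_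
    · filter_upwards with τ
      exact ((hx₃cont.comp (continuous_const.sub continuous_id)).aestronglyMeasurable.mul
        hKmeas.aestronglyMeasurable).restrict
    · filter_upwards with τ
      filter_upwards with φ
      rw [norm_mul]
      exact mul_le_mul_of_nonneg_right
        (by simpa [Real.norm_eq_abs] using hC3 (τ - φ)) (norm_nonneg _)
    · exact hKi.norm.const_mul C3
    · filter_upwards with φ
      exact ((hx₃cont.comp (continuous_id.sub continuous_const)).continuousAt).mul
        continuousAt_const
  set m : ℝ → ℝ := fun u => μ (x₃ u) with hmdef
  have hmcont : Continuous m := hμcont.comp hx₃cont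
  have hmlb : ∀ u, μ₀ ≤ m u := fun u => hμlb _
  set g₁ : ℝ → ℝ := fun s => f₁ (∫ φ in Set.Ioi (0 : ℝ), x₃ (s - φ) * K₁ φ) with hg₁def
  have hg₁cont : Continuous g₁ := hf₁.comp hdelay
  have hg₁b : ∃ C, ∀ s, |g₁ s| ≤ C := by
    obtain ⟨C, hC⟩ := hf₁b; exact ⟨C, fun s => hC _⟩
  have hrx₁ : ∀ r : ℝ, x₁ r
      = ∫ σ in Set.Iic r, g₁ σ * Real.exp (-∫ u in σ..r, m u) :=
    key_repr μ₀ hμ₀ m hmcont hmlb g₁ hg₁cont hg₁b x₁ hx₁b h1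
  have hg₂b : ∃ C, ∀ s, |f₂ (x₁ s)| ≤ C := by
    obtain ⟨C, hC⟩ := hf₂b; exact ⟨C, fun s => hC _⟩
  have hrx₂ : ∀ t : ℝ, x₂ t
      = ∫ r in Set.Iic t, f₂ (x₁ r) * Real.exp (-∫ u in r..t, m u) :=
    key_repr μ₀ hμ₀ m hmcont hmlb (fun s => f₂ (x₁ s)) (hf₂.comp hx₁cont) hg₂b x₂ hx₂b h2
  intro t
  have key : (∫ r in Set.Iic t,
      f₂ (∫ σ in Set.Iic r,
            f₁ (∫ φ in Set.Ioi (0 : ℝ), x₃ (σ - φ) * K₁ φ)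
              * Real.exp (-∫ u in σ..r, μ (x₃ u)))
        * Real.exp (-∫ u in r..t, μ (x₃ u))) = x₂ t := by
    rw [hrx₂ t]
    congr 1
    funext r
    rw [← hrx₁ r]
  rw [key]
  exact h3 t
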